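/- For every τ in the upper half plane, all integers m, n, and all x, z ∈ ℂ with θ(x|τ) ≠ 0 and θ(2πiz|τ) ≠ 0, the Jacobi form F satisfies the elliptic property F(x, z + mτ + n, τ) = e^{−mx} · F(x, z, τ). -/

import Mathlib

open Complex Filter

/-- The Jacobi theta function `θ(z|τ) = ∑_{n∈ℤ} (−1)^n e^{iπτ(n+1/2)²} e^{z(n+1/2)}`. -/
noncomputable def jTheta (z : ℂ) (τ : UpperHalfPlane) : ℂ :=
  ∑' n : ℤ, (-1 : ℂ) ^ n * Complex.exp (Real.pi * I * (τ : ℂ) * ((n : ℂ) + 1/2) ^ 2)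
    * Complex.exp (z * ((n : ℂ) + 1/2))

/-- The Jacobi form `F(x,z,τ) = 2πi θ'(0|τ) θ(x+2πiz|τ)/(θ(x|τ) θ(2πiz|τ))`. -/
noncomputable def jacobiF (x z : ℂ) (τ : UpperHalfPlane) : ℂ :=
  2 * Real.pi * I * deriv (fun w => jTheta w τ) 0 * jTheta (x + 2 * Real.pi * I * z) τ /
    (jTheta x τ * jTheta (2 * Real.pi * I * z) τ)

lemma neg_one_zpow_eq_exp (j : ℤ) : ((-1 : ℂ)) ^ j = Complex.exp ((j : ℂ) * (Real.pi * I)) := by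
  rw [Complex.exp_int_mul, Complex.exp_pi_mul_I]

lemma jTheta_shift (τ : UpperHalfPlane) (m n : ℤ) (w : ℂ) :
    jTheta (w + 2 * Real.pi * I * ((m : ℂ) * τ + n)) τ
      = (-1 : ℂ) ^ (m + n) * Complex.exp (-(Real.pi * I * (m : ℂ) ^ 2 * τ) - m * w)
          * jTheta w τ := by
  unfold jTheta
  rw [← tsum_mul_left,
    ← Equiv.tsum_eq (Equiv.addRight m) (fun k : ℤ =>
      (-1 : ℂ) ^ (m + n) * Complex.exp (-(Real.pi * I * (m : ℂ) ^ 2 * τ) - m * w) *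
        ((-1 : ℂ) ^ k * Complex.exp (Real.pi * I * (τ : ℂ) * ((k : ℂ) + 1/2) ^ 2)
          * Complex.exp (w * ((k : ℂ) + 1/2))))]
  congr 1
  funext k
  simp only [Equiv.coe_addRight]
  push_cast
  rw [neg_one_zpow_eq_exp, neg_one_zpow_eq_exp, neg_one_zpow_eq_exp]
  simp only [← Complex.exp_add]
  rw [Complex.exp_eq_exp_iff_exists_int]
  exact ⟨n * k - m, by push_cast; ring⟩

/-- Elliptic property of the Jacobi form: `F(x, z + mτ + n, τ) = e^{−mx} F(x,z,τ)`. -/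
theorem jacobiF_elliptic (τ : UpperHalfPlane) (m n : ℤ) (x z : ℂ)
    (hx : jTheta x τ ≠ 0) (hz : jTheta (2 * Real.pi * I * z) τ ≠ 0) :
    jacobiF x (z + (m : ℂ) * (τ : ℂ) + (n : ℂ)) τ
      = Complex.exp (-(m : ℂ) * x) * jacobiF x z τ := by
  unfold jacobiF
  have e1 : x + 2 * Real.pi * I * (z + (m : ℂ) * (τ : ℂ) + (n : ℂ))
      = (x + 2 * Real.pi * I * z) + 2 * Real.pi * I * ((m : ℂ) * τ + n) := by ring
  have e2 : 2 * Real.pi * I * (z + (m : ℂ) * (τ : ℂ) + (n : ℂ))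
      = (2 * Real.pi * I * z) + 2 * Real.pi * I * ((m : ℂ) * τ + n) := by ring
  rw [e1, e2, jTheta_shift, jTheta_shift]
  have hC : ((-1 : ℂ) ^ (m + n)) ≠ 0 := by
    exact zpow_ne_zero _ (by norm_num)
  have hE : Complex.exp (-(Real.pi * I * (m : ℂ) ^ 2 * τ) - m * (2 * Real.pi * I * z)) ≠ 0 :=
    Complex.exp_ne_zero _
  have key : Complex.exp (-(Real.pi * I * (m : ℂ) ^ 2 * τ) - m * (x + 2 * Real.pi * I * z))
      = Complex.exp (-(m : ℂ) * x) *
        Complex.exp (-(Real.pi * I * (m : ℂ) ^ 2 * τ) - m * (2 * Real.pi * I * z)) := by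
    rw [← Complex.exp_add]; ring_nf
  rw [key]
  field_simp
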